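/- Let 0 < μ ≤ T, j₀ ∈ {0,1}, h ∈ ℕ, and let ω_{j₀},...,ω_h be real numbers with ω_j = 0 if and only if j = 0 and {ω_j, −ω_j} ≠ {ω_l, −ω_l} for j ≠ l. Then there exists ξ > 0, depending only on T, μ and ω_{j₀},...,ω_h, such that for every (T,μ)-signal α and every t ≥ 0 one has ∫_t^{t+T} α(τ) v(τ) v(τ)ᵀ dτ ≥ ξ Id_{2h+1−j₀} in the order of symmetric matrices. -/

import Mathlib

open MeasureTheory Filter Matrix Topology intervalIntegral

noncomputable section

/-- A `(T,μ)`-signal: a measurable function with values in `[0,1]` whose integral over any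
window `[t, t+T]` with `t ≥ 0` is at least `μ`. -/
def IsPESignal (T μ : ℝ) (α : ℝ → ℝ) : Prop :=
  Measurable α ∧ (∀ t, α t ∈ Set.Icc (0:ℝ) 1) ∧
    ∀ t : ℝ, 0 ≤ t → μ ≤ ∫ s in t..(t + T), α s

/-- The vector `v(t) ∈ ℝ^{2h+1-j₀}`: its components are `1` (present only when `j₀ = 0`,
corresponding to `ω₀ = 0`) followed by the pairs `e^{ω_j A₀ t} b₀ = (sin(ω_j t), cos(ω_j t))`
for `j = 1, …, h`, where `A₀ = [[0,1],[-1,0]]` and `b₀ = (0,1)ᵀ`. -/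
def pev (j₀ h : ℕ) (ω : ℕ → ℝ) (t : ℝ) : Fin (2 * h + 1 - j₀) → ℝ := fun i =>
  if (i : ℕ) + j₀ = 0 then 1
  else if ((i : ℕ) + j₀) % 2 = 1 then Real.sin (ω (((i : ℕ) + j₀ + 1) / 2) * t)
  else Real.cos (ω (((i : ℕ) + j₀) / 2) * t)

namespace PEProof

/-- Scalar basis functions: `1`, `sin (ω_j s)`, `cos (ω_j s)` indexed by `k ∈ ℕ`. -/
def pe (ω : ℕ → ℝ) (k : ℕ) (s : ℝ) : ℝ :=
  if k = 0 then 1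
  else if k % 2 = 1 then Real.sin (ω ((k + 1) / 2) * s)
  else Real.cos (ω (k / 2) * s)

/-- Trigonometric polynomial with coefficients `c`. -/
def pP (j₀ h : ℕ) (ω : ℕ → ℝ) (c : ℕ → ℝ) (s : ℝ) : ℝ :=
  ∑ k ∈ Finset.Icc j₀ (2 * h), c k * pe ω k s

theorem pe_cont (ω : ℕ → ℝ) (k : ℕ) : Continuous (pe ω k) := by
  unfold pe
  split_ifs
  · exact continuous_const
  · exact Real.continuous_sin.comp (continuous_const.mul continuous_id)
  · exact Real.continuous_cos.comp (continuous_const.mul continuous_id)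

theorem pe_abs_le (ω : ℕ → ℝ) (k : ℕ) (s : ℝ) : |pe ω k s| ≤ 1 := by
  unfold pe
  split_ifs
  · simp
  · exact Real.abs_sin_le_one _
  · exact Real.abs_cos_le_one _

theorem pP_cont (j₀ h : ℕ) (ω : ℕ → ℝ) (c : ℕ → ℝ) : Continuous (pP j₀ h ω c) := by
  unfold pP
  exact continuous_finset_sum _ fun k _ => continuous_const.mul (pe_cont ω k)

theorem pP_sub_le (j₀ h : ℕ) (ω : ℕ → ℝ) (c c' : ℕ → ℝ) (s : ℝ) :
    |pP j₀ h ω c s - pP j₀ h ω c' s| ≤ ∑ k ∈ Finset.Icc j₀ (2 * h), |c k - c' k| := by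
  rw [pP, pP, ← Finset.sum_sub_distrib]
  refine (Finset.abs_sum_le_sum_abs _ _).trans (Finset.sum_le_sum fun k _ => ?_)
  rw [← sub_mul, abs_mul]
  calc |c k - c' k| * |pe ω k s| ≤ |c k - c' k| * 1 :=
        mul_le_mul_of_nonneg_left (pe_abs_le ω k s) (abs_nonneg _)
    _ = |c k - c' k| := mul_one _



theorem integral_cos_eq {l : ℝ} (hl : l ≠ 0) (L : ℝ) :
    ∫ s in (0:ℝ)..L, Real.cos (l * s) = Real.sin (l * L) / l := by
  rw [intervalIntegral.integral_comp_mul_left Real.cos hl, integral_cos]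
  simp [div_eq_inv_mul]

theorem integral_sin_eq {l : ℝ} (hl : l ≠ 0) (L : ℝ) :
    ∫ s in (0:ℝ)..L, Real.sin (l * s) = (1 - Real.cos (l * L)) / l := by
  rw [intervalIntegral.integral_comp_mul_left Real.sin hl, integral_sin]
  simp [div_eq_inv_mul]

theorem avg_tendsto_zero {f : ℝ → ℝ} {C : ℝ} (hb : ∀ L, |∫ s in (0:ℝ)..L, f s| ≤ C) :
    Tendsto (fun L => (∫ s in (0:ℝ)..L, f s) / L) atTop (𝓝 0) := by
  refine squeeze_zero_norm' (a := fun L => C / L) ?_ ?_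
  · filter_upwards [eventually_gt_atTop (0:ℝ)] with L hL
    rw [norm_div, Real.norm_eq_abs, Real.norm_eq_abs, abs_of_pos hL]
    gcongr
    exact hb L
  · exact tendsto_const_nhds.div_atTop tendsto_id

theorem avg_cos {l : ℝ} (hl : l ≠ 0) :
    Tendsto (fun L => (∫ s in (0:ℝ)..L, Real.cos (l * s)) / L) atTop (𝓝 0) := by
  refine avg_tendsto_zero (C := 1 / |l|) fun L => ?_
  rw [integral_cos_eq hl, abs_div]
  gcongr
  exact Real.abs_sin_le_one _

theorem avg_sin (l : ℝ) :
    Tendsto (fun L => (∫ s in (0:ℝ)..L, Real.sin (l * s)) / L) atTop (𝓝 0) := by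
  rcases eq_or_ne l 0 with rfl | hl
  · simp only [zero_mul, Real.sin_zero, intervalIntegral.integral_zero, zero_div]
    exact tendsto_const_nhds
  · refine avg_tendsto_zero (C := 2 / |l|) fun L => ?_
    rw [integral_sin_eq hl, abs_div]
    gcongr
    calc |1 - Real.cos (l * L)| ≤ |1| + |Real.cos (l * L)| := abs_sub _ _
      _ ≤ 1 + 1 := by rw [abs_one]; exact add_le_add_right (Real.abs_cos_le_one _) 1
      _ = 2 := by norm_num

theorem avg_const (a : ℝ) :
    Tendsto (fun L => (∫ s in (0:ℝ)..L, a) / L) atTop (𝓝 a) := by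
  have : ∀ᶠ L in atTop, a = (∫ s in (0:ℝ)..L, a) / L := by
    filter_upwards [eventually_gt_atTop (0:ℝ)] with L hL
    rw [intervalIntegral.integral_const, smul_eq_mul]
    field_simp
    ring
  exact tendsto_const_nhds.congr' this

theorem avg_add {f g : ℝ → ℝ} {A B : ℝ} (hf : Continuous f) (hg : Continuous g)
    (ha : Tendsto (fun L => (∫ s in (0:ℝ)..L, f s) / L) atTop (𝓝 A))
    (hb : Tendsto (fun L => (∫ s in (0:ℝ)..L, g s) / L) atTop (𝓝 B)) :
    Tendsto (fun L => (∫ s in (0:ℝ)..L, f s + g s) / L) atTop (𝓝 (A + B)) := by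
  have h : ∀ L : ℝ, (∫ s in (0:ℝ)..L, f s + g s)
      = (∫ s in (0:ℝ)..L, f s) + ∫ s in (0:ℝ)..L, g s := fun L =>
    integral_add (hf.intervalIntegrable _ _) (hg.intervalIntegrable _ _)
  simpa only [h, add_div] using ha.add hb

theorem avg_smul {f : ℝ → ℝ} {A : ℝ} (a : ℝ)
    (ha : Tendsto (fun L => (∫ s in (0:ℝ)..L, f s) / L) atTop (𝓝 A)) :
    Tendsto (fun L => (∫ s in (0:ℝ)..L, a * f s) / L) atTop (𝓝 (a * A)) := by
  have h : ∀ L : ℝ, (∫ s in (0:ℝ)..L, a * f s) = a * ∫ s in (0:ℝ)..L, f s := fun L =>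
    integral_const_mul a f
  simpa only [h, mul_div_assoc] using ha.const_mul a


theorem pe_zero (ω : ℕ → ℝ) (s : ℝ) : pe ω 0 s = 1 := by simp [pe]

theorem pe_odd (ω : ℕ → ℝ) {k : ℕ} (hk : k % 2 = 1) (s : ℝ) :
    pe ω k s = Real.sin (ω ((k + 1) / 2) * s) := by
  have : k ≠ 0 := by omega
  simp [pe, this, hk]

theorem pe_even (ω : ℕ → ℝ) {k : ℕ} (hk0 : k ≠ 0) (hk : k % 2 = 0) (s : ℝ) :
    pe ω k s = Real.cos (ω (k / 2) * s) := by
  simp [pe, hk0, hk]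

theorem pe_mul_avg (j₀ h : ℕ) (ω : ℕ → ℝ) (hj₀ : j₀ ≤ 1)
    (hω0 : ∀ j, j₀ ≤ j → j ≤ h → (ω j = 0 ↔ j = 0))
    (hωdist : ∀ j l, j₀ ≤ j → j ≤ h → j₀ ≤ l → l ≤ h → j ≠ l → ω j ≠ ω l ∧ ω j ≠ -ω l)
    {k l : ℕ} (hk : k ∈ Finset.Icc j₀ (2 * h)) (hl : l ∈ Finset.Icc j₀ (2 * h)) :
    Tendsto (fun L => (∫ s in (0:ℝ)..L, pe ω k s * pe ω l s) / L) atTop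
      (𝓝 (if k = l then (if k = 0 then 1 else 1 / 2) else 0)) := by
  simp only [Finset.mem_Icc] at hk hl
  have hne : ∀ j, 1 ≤ j → j ≤ h → ω j ≠ 0 := fun j h1 h2 hz => by
    have := (hω0 j (hj₀.trans h1) h2).mp hz; omega
  have hdiff : ∀ j m, 1 ≤ j → j ≤ h → 1 ≤ m → m ≤ h → j ≠ m →
      ω j - ω m ≠ 0 ∧ ω j + ω m ≠ 0 := fun j m h1 h2 h3 h4 h5 => by
    obtain ⟨d1, d2⟩ := hωdist j m (hj₀.trans h1) h2 (hj₀.trans h3) h4 h5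
    constructor
    · exact sub_ne_zero_of_ne d1
    · intro hz; exact d2 (by linarith)
  have contc : ∀ lam : ℝ, Continuous (fun s : ℝ => Real.cos (lam * s)) := fun lam =>
    Real.continuous_cos.comp (continuous_const.mul continuous_id)
  have conts : ∀ lam : ℝ, Continuous (fun s : ℝ => Real.sin (lam * s)) := fun lam =>
    Real.continuous_sin.comp (continuous_const.mul continuous_id)
  by_cases hk0 : k = 0
  · by_cases hl0 : l = 0
    · subst hk0; subst hl0
      simp only [if_pos rfl]
      have heq : ∀ s : ℝ, pe ω 0 s * pe ω 0 s = 1 := fun s => by rw [pe_zero]; ring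
      simp only [heq]
      exact avg_const 1
    · -- k = 0, l ≠ 0
      subst hk0
      rw [if_neg (fun hh => hl0 hh.symm)]
      rcases Nat.even_or_odd l with hl2 | hl2
      · have hl2 : l % 2 = 0 := Nat.even_iff.mp hl2
        have hfl : 1 ≤ l / 2 ∧ l / 2 ≤ h := by omega
        have heq : ∀ s : ℝ, pe ω 0 s * pe ω l s = Real.cos (ω (l / 2) * s) := fun s => by
          rw [pe_zero, pe_even ω hl0 hl2]; ring
        simp only [heq]
        exact avg_cos (hne _ hfl.1 hfl.2)
      · have hl2 : l % 2 = 1 := Nat.odd_iff.mp hl2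
        have heq : ∀ s : ℝ, pe ω 0 s * pe ω l s = Real.sin (ω ((l + 1) / 2) * s) := fun s => by
          rw [pe_zero, pe_odd ω hl2]; ring
        simp only [heq]
        exact avg_sin _
  · by_cases hl0 : l = 0
    · subst hl0
      rw [if_neg hk0]
      rcases Nat.even_or_odd k with hk2 | hk2
      · have hk2 : k % 2 = 0 := Nat.even_iff.mp hk2
        have hfk : 1 ≤ k / 2 ∧ k / 2 ≤ h := by omega
        have heq : ∀ s : ℝ, pe ω k s * pe ω 0 s = Real.cos (ω (k / 2) * s) := fun s => by
          rw [pe_zero, pe_even ω hk0 hk2]; ring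
        simp only [heq]
        exact avg_cos (hne _ hfk.1 hfk.2)
      · have hk2 : k % 2 = 1 := Nat.odd_iff.mp hk2
        have heq : ∀ s : ℝ, pe ω k s * pe ω 0 s = Real.sin (ω ((k + 1) / 2) * s) := fun s => by
          rw [pe_zero, pe_odd ω hk2]; ring
        simp only [heq]
        exact avg_sin _
    · -- k ≠ 0, l ≠ 0
      rcases Nat.even_or_odd k with hk2 | hk2 <;> rcases Nat.even_or_odd l with hl2 | hl2
      · -- both even
        have hk2 : k % 2 = 0 := Nat.even_iff.mp hk2
        have hl2 : l % 2 = 0 := Nat.even_iff.mp hl2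
        set a := ω (k / 2) with ha
        set b := ω (l / 2) with hb
        have hfk : 1 ≤ k / 2 ∧ k / 2 ≤ h := by omega
        have hfl : 1 ≤ l / 2 ∧ l / 2 ≤ h := by omega
        by_cases hkl : k = l
        · subst hkl
          rw [if_pos rfl, if_neg hk0]
          have h2a : 2 * a ≠ 0 := by
            have := hne _ hfk.1 hfk.2; rw [← ha] at this
            intro hz; exact this (by linarith)
          have heq : ∀ s : ℝ, pe ω k s * pe ω k s
              = 1 / 2 + 1 / 2 * Real.cos (2 * a * s) := fun s => by
            rw [pe_even ω hk0 hk2, ← ha]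
            have h2 : 2 * a * s = a * s + a * s := by ring
            rw [h2, Real.cos_add]
            nlinarith [Real.sin_sq_add_cos_sq (a * s)]
          simp only [heq]
          have := avg_add (f := fun _ : ℝ => (1:ℝ) / 2) continuous_const
            (continuous_const.mul (contc (2 * a)))
            (avg_const (1 / 2)) (avg_smul (1 / 2) (avg_cos h2a))
          simpa using this
        · rw [if_neg hkl]
          have hjj : k / 2 ≠ l / 2 := by omega
          obtain ⟨hd, hs⟩ := hdiff _ _ hfk.1 hfk.2 hfl.1 hfl.2 hjj
          rw [← ha, ← hb] at hd hs
          have heq : ∀ s : ℝ, pe ω k s * pe ω l s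
              = 1 / 2 * Real.cos ((a - b) * s) + 1 / 2 * Real.cos ((a + b) * s) := fun s => by
            rw [pe_even ω hk0 hk2, pe_even ω hl0 hl2, ← ha, ← hb, sub_mul, add_mul,
              Real.cos_sub, Real.cos_add]
            ring
          simp only [heq]
          have := avg_add (continuous_const.mul (contc (a - b)))
            (continuous_const.mul (contc (a + b)))
            (avg_smul (1 / 2) (avg_cos hd)) (avg_smul (1 / 2) (avg_cos hs))
          simpa using this
      · -- k even, l odd
        have hk2 : k % 2 = 0 := Nat.even_iff.mp hk2
        have hl2 : l % 2 = 1 := Nat.odd_iff.mp hl2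
        have hkl : k ≠ l := by omega
        rw [if_neg hkl]
        set a := ω (k / 2) with ha
        set b := ω ((l + 1) / 2) with hb
        have heq : ∀ s : ℝ, pe ω k s * pe ω l s
            = 1 / 2 * Real.sin ((b + a) * s) + 1 / 2 * Real.sin ((b - a) * s) := fun s => by
          rw [pe_even ω hk0 hk2, pe_odd ω hl2, ← ha, ← hb, sub_mul, add_mul,
            Real.sin_sub, Real.sin_add]
          ring
        simp only [heq]
        have := avg_add (continuous_const.mul (conts (b + a)))
          (continuous_const.mul (conts (b - a)))
          (avg_smul (1 / 2) (avg_sin (b + a))) (avg_smul (1 / 2) (avg_sin (b - a)))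
        simpa using this
      · -- k odd, l even
        have hk2 : k % 2 = 1 := Nat.odd_iff.mp hk2
        have hl2 : l % 2 = 0 := Nat.even_iff.mp hl2
        have hkl : k ≠ l := by omega
        rw [if_neg hkl]
        set a := ω ((k + 1) / 2) with ha
        set b := ω (l / 2) with hb
        have heq : ∀ s : ℝ, pe ω k s * pe ω l s
            = 1 / 2 * Real.sin ((a + b) * s) + 1 / 2 * Real.sin ((a - b) * s) := fun s => by
          rw [pe_odd ω hk2, pe_even ω hl0 hl2, ← ha, ← hb, sub_mul, add_mul,
            Real.sin_sub, Real.sin_add]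
          ring
        simp only [heq]
        have := avg_add (continuous_const.mul (conts (a + b)))
          (continuous_const.mul (conts (a - b)))
          (avg_smul (1 / 2) (avg_sin (a + b))) (avg_smul (1 / 2) (avg_sin (a - b)))
        simpa using this
      · -- both odd
        have hk2 : k % 2 = 1 := Nat.odd_iff.mp hk2
        have hl2 : l % 2 = 1 := Nat.odd_iff.mp hl2
        set a := ω ((k + 1) / 2) with ha
        set b := ω ((l + 1) / 2) with hb
        have hfk : 1 ≤ (k + 1) / 2 ∧ (k + 1) / 2 ≤ h := by omega
        have hfl : 1 ≤ (l + 1) / 2 ∧ (l + 1) / 2 ≤ h := by omega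
        by_cases hkl : k = l
        · subst hkl
          rw [if_pos rfl, if_neg hk0]
          have h2a : 2 * a ≠ 0 := by
            have := hne _ hfk.1 hfk.2; rw [← ha] at this
            intro hz; exact this (by linarith)
          have heq : ∀ s : ℝ, pe ω k s * pe ω k s
              = 1 / 2 + -(1 / 2) * Real.cos (2 * a * s) := fun s => by
            rw [pe_odd ω hk2, ← ha]
            have h2 : 2 * a * s = a * s + a * s := by ring
            rw [h2, Real.cos_add]
            nlinarith [Real.sin_sq_add_cos_sq (a * s)]
          simp only [heq]
          have := avg_add (f := fun _ : ℝ => (1:ℝ) / 2) continuous_const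
            (continuous_const.mul (contc (2 * a)))
            (avg_const (1 / 2)) (avg_smul (-(1 / 2)) (avg_cos h2a))
          simpa using this
        · rw [if_neg hkl]
          have hjj : (k + 1) / 2 ≠ (l + 1) / 2 := by omega
          obtain ⟨hd, hs⟩ := hdiff _ _ hfk.1 hfk.2 hfl.1 hfl.2 hjj
          rw [← ha, ← hb] at hd hs
          have heq : ∀ s : ℝ, pe ω k s * pe ω l s
              = 1 / 2 * Real.cos ((a - b) * s) + -(1 / 2) * Real.cos ((a + b) * s) := fun s => by
            rw [pe_odd ω hk2, pe_odd ω hl2, ← ha, ← hb, sub_mul, add_mul,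
              Real.cos_sub, Real.cos_add]
            ring
          simp only [heq]
          have := avg_add (continuous_const.mul (contc (a - b)))
            (continuous_const.mul (contc (a + b)))
            (avg_smul (1 / 2) (avg_cos hd)) (avg_smul (-(1 / 2)) (avg_cos hs))
          simpa using this

theorem pP_sq_avg (j₀ h : ℕ) (ω : ℕ → ℝ) (hj₀ : j₀ ≤ 1)
    (hω0 : ∀ j, j₀ ≤ j → j ≤ h → (ω j = 0 ↔ j = 0))
    (hωdist : ∀ j l, j₀ ≤ j → j ≤ h → j₀ ≤ l → l ≤ h → j ≠ l → ω j ≠ ω l ∧ ω j ≠ -ω l)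
    (c : ℕ → ℝ) :
    Tendsto (fun L => (∫ s in (0:ℝ)..L, (pP j₀ h ω c s) ^ 2) / L) atTop
      (𝓝 (∑ k ∈ Finset.Icc j₀ (2 * h), (if k = 0 then 1 else 1 / 2) * c k ^ 2)) := by
  have hexp : ∀ s : ℝ, (pP j₀ h ω c s) ^ 2 =
      ∑ k ∈ Finset.Icc j₀ (2 * h), ∑ l ∈ Finset.Icc j₀ (2 * h),
        (c k * c l) * (pe ω k s * pe ω l s) := fun s => by
    rw [pP, sq, Finset.sum_mul_sum]
    exact Finset.sum_congr rfl fun k _ => Finset.sum_congr rfl fun l _ => by ring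
  have hint : ∀ L : ℝ, (∫ s in (0:ℝ)..L, (pP j₀ h ω c s) ^ 2)
      = ∑ k ∈ Finset.Icc j₀ (2 * h), ∑ l ∈ Finset.Icc j₀ (2 * h),
        (c k * c l) * ∫ s in (0:ℝ)..L, pe ω k s * pe ω l s := by
    intro L
    simp only [hexp]
    rw [intervalIntegral.integral_finset_sum (f := fun k s => ∑ l ∈ Finset.Icc j₀ (2 * h),
      (c k * c l) * (pe ω k s * pe ω l s)) fun k _ => (Continuous.intervalIntegrable
      (continuous_finset_sum _ fun l _ =>
        continuous_const.mul ((pe_cont ω k).mul (pe_cont ω l))) _ _)]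
    refine Finset.sum_congr rfl fun k _ => ?_
    rw [intervalIntegral.integral_finset_sum (f := fun l s => (c k * c l) * (pe ω k s * pe ω l s))
      fun l _ => (Continuous.intervalIntegrable
      (continuous_const.mul ((pe_cont ω k).mul (pe_cont ω l))) _ _)]
    exact Finset.sum_congr rfl fun l _ => integral_const_mul _ _
  have key : Tendsto (fun L => (∫ s in (0:ℝ)..L, (pP j₀ h ω c s) ^ 2) / L) atTop
      (𝓝 (∑ k ∈ Finset.Icc j₀ (2 * h), ∑ l ∈ Finset.Icc j₀ (2 * h),
        (c k * c l) * (if k = l then (if k = 0 then 1 else 1 / 2) else 0))) := by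
    simp only [hint, Finset.sum_div, mul_div_assoc]
    exact tendsto_finset_sum _ fun k hk => tendsto_finset_sum _ fun l hl =>
      ((pe_mul_avg j₀ h ω hj₀ hω0 hωdist hk hl).const_mul (c k * c l))
  have hv : (∑ k ∈ Finset.Icc j₀ (2 * h), (if k = 0 then 1 else 1 / 2) * c k ^ 2)
      = ∑ k ∈ Finset.Icc j₀ (2 * h), ∑ l ∈ Finset.Icc j₀ (2 * h),
        (c k * c l) * (if k = l then (if k = 0 then 1 else 1 / 2) else 0) := by
    refine Finset.sum_congr rfl fun k hk => ?_
    rw [Finset.sum_eq_single k]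
    · rw [if_pos rfl]; ring
    · intro l _ hlk
      rw [if_neg (fun hh : k = l => hlk hh.symm), mul_zero]
    · intro hkk; exact absurd hk hkk
  rw [hv]
  exact key

theorem coeff_eq_zero (j₀ h : ℕ) (ω : ℕ → ℝ) (hj₀ : j₀ ≤ 1)
    (hω0 : ∀ j, j₀ ≤ j → j ≤ h → (ω j = 0 ↔ j = 0))
    (hωdist : ∀ j l, j₀ ≤ j → j ≤ h → j₀ ≤ l → l ≤ h → j ≠ l → ω j ≠ ω l ∧ ω j ≠ -ω l)
    (c : ℕ → ℝ) (hzero : ∀ s : ℝ, pP j₀ h ω c s = 0) :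
    ∀ k ∈ Finset.Icc j₀ (2 * h), c k = 0 := by
  have h0 : Tendsto (fun L : ℝ => (∫ s in (0:ℝ)..L, (pP j₀ h ω c s) ^ 2) / L) atTop
      (𝓝 0) := by
    simp only [hzero]
    simp
  have huniq := tendsto_nhds_unique h0 (pP_sq_avg j₀ h ω hj₀ hω0 hωdist c)
  have hterm := (Finset.sum_eq_zero_iff_of_nonneg (fun k _ => by positivity)).mp huniq.symm
  intro k hk
  have := hterm k hk
  have hw : (if k = 0 then (1:ℝ) else 1 / 2) ≠ 0 := by split_ifs <;> norm_num
  have := (mul_eq_zero.mp this).resolve_left hw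
  exact (pow_eq_zero_iff two_ne_zero).mp this

/-- Complexification of `pe`. -/
def peC (ω : ℕ → ℝ) (k : ℕ) (z : ℂ) : ℂ :=
  if k = 0 then 1
  else if k % 2 = 1 then Complex.sin (ω ((k + 1) / 2) * z)
  else Complex.cos (ω (k / 2) * z)

/-- Complexification of `pP`. -/
def pPC (j₀ h : ℕ) (ω : ℕ → ℝ) (c : ℕ → ℝ) (z : ℂ) : ℂ :=
  ∑ k ∈ Finset.Icc j₀ (2 * h), (c k : ℂ) * peC ω k z

theorem pPC_ofReal (j₀ h : ℕ) (ω : ℕ → ℝ) (c : ℕ → ℝ) (s : ℝ) :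
    pPC j₀ h ω c (s : ℂ) = (pP j₀ h ω c s : ℂ) := by
  rw [pPC, pP]
  push_cast
  refine Finset.sum_congr rfl fun k _ => ?_
  congr 1
  rw [peC, pe]
  split_ifs <;> push_cast <;> simp

theorem pPC_differentiable (j₀ h : ℕ) (ω : ℕ → ℝ) (c : ℕ → ℝ) :
    Differentiable ℂ (pPC j₀ h ω c) := by
  refine Differentiable.fun_sum fun k _ => Differentiable.const_mul (𝕜 := ℂ) ?_ _
  unfold peC
  split_ifs
  · exact differentiable_const 1
  · exact Complex.differentiable_sin.comp ((differentiable_const _).mul differentiable_id)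
  · exact Complex.differentiable_cos.comp ((differentiable_const _).mul differentiable_id)

theorem zeroset_finite (j₀ h : ℕ) (ω : ℕ → ℝ) (hj₀ : j₀ ≤ 1)
    (hω0 : ∀ j, j₀ ≤ j → j ≤ h → (ω j = 0 ↔ j = 0))
    (hωdist : ∀ j l, j₀ ≤ j → j ≤ h → j₀ ≤ l → l ≤ h → j ≠ l → ω j ≠ ω l ∧ ω j ≠ -ω l)
    (c : ℕ → ℝ) (hc : ¬ ∀ k ∈ Finset.Icc j₀ (2 * h), c k = 0) (a b : ℝ) :
    Set.Finite {s : ℝ | s ∈ Set.Icc a b ∧ pP j₀ h ω c s = 0} := by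
  by_contra hinf
  rw [← Set.not_infinite, not_not] at hinf
  obtain ⟨z, _, hacc⟩ := hinf.exists_accPt_of_subset_isCompact isCompact_Icc
    (fun s hs => hs.1)
  rw [accPt_iff_frequently] at hacc
  have hfreq : ∃ᶠ y in 𝓝[≠] z, pP j₀ h ω c y = 0 := by
    rw [frequently_nhdsWithin_iff]
    exact hacc.mono fun y hy => ⟨hy.2.2, hy.1⟩
  have htends : Tendsto (fun y : ℝ => (y : ℂ)) (𝓝[≠] z) (𝓝[≠] (z : ℂ)) := by
    rw [tendsto_nhdsWithin_iff]
    constructor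
    · exact (Complex.continuous_ofReal.tendsto z).mono_left nhdsWithin_le_nhds
    · exact eventually_mem_nhdsWithin.mono fun y hy => by
        simpa using Complex.ofReal_injective.ne hy
  have hfC : ∃ᶠ w in 𝓝[≠] (z : ℂ), pPC j₀ h ω c w = 0 := by
    refine htends.frequently (hfreq.mono fun y hy => ?_)
    rw [pPC_ofReal, hy]
    exact Complex.ofReal_zero
  have hAn : AnalyticOnNhd ℂ (pPC j₀ h ω c) Set.univ :=
    (pPC_differentiable j₀ h ω c).differentiableOn.analyticOnNhd isOpen_univ
  have hEq := hAn.eqOn_zero_of_preconnected_of_frequently_eq_zero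
    isPreconnected_univ (Set.mem_univ (z : ℂ)) hfC
  have hall : ∀ s : ℝ, pP j₀ h ω c s = 0 := fun s => by
    have := hEq (Set.mem_univ (s : ℂ))
    rw [pPC_ofReal, Pi.zero_apply] at this
    exact_mod_cast this
  exact hc (coeff_eq_zero j₀ h ω hj₀ hω0 hωdist c hall)

/-- The "sphere" of coefficient vectors supported on `Icc j₀ (2h)`. -/
def Ksph (j₀ h : ℕ) : Set (ℕ → ℝ) :=
  {c | (∀ k, k ∉ Finset.Icc j₀ (2 * h) → c k = 0) ∧
    ∑ k ∈ Finset.Icc j₀ (2 * h), c k ^ 2 = 1}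

theorem Ksph_compact (j₀ h : ℕ) : IsCompact (Ksph j₀ h) := by
  have hclosed1 : IsClosed {c : ℕ → ℝ | ∀ k, k ∉ Finset.Icc j₀ (2 * h) → c k = 0} := by
    have : {c : ℕ → ℝ | ∀ k, k ∉ Finset.Icc j₀ (2 * h) → c k = 0}
        = ⋂ (k) (_ : k ∉ Finset.Icc j₀ (2 * h)), (fun c : ℕ → ℝ => c k) ⁻¹' {0} := by
      ext c; simp [Set.mem_iInter]
    rw [this]
    exact isClosed_iInter fun k => isClosed_iInter fun _ =>
      isClosed_singleton.preimage (continuous_apply k)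
  have hclosed2 : IsClosed {c : ℕ → ℝ | ∑ k ∈ Finset.Icc j₀ (2 * h), c k ^ 2 = 1} :=
    isClosed_eq (continuous_finset_sum _ fun k _ => (continuous_apply k).pow 2)
      continuous_const
  have hcl : IsClosed (Ksph j₀ h) := by
    rw [Ksph, Set.setOf_and]
    exact hclosed1.inter hclosed2
  refine IsCompact.of_isClosed_subset (isCompact_univ_pi (ι := ℕ) (s := fun k =>
    if k ∈ Finset.Icc j₀ (2 * h) then Set.Icc (-1 : ℝ) 1 else {0}) fun k => ?_) hcl ?_
  · split_ifs
    · exact isCompact_Icc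
    · exact isCompact_singleton
  · intro c hc
    rw [Set.mem_univ_pi]
    intro k
    split_ifs with hk
    · have h1 : c k ^ 2 ≤ 1 := by
        rw [← hc.2]
        exact Finset.single_le_sum (fun l _ => sq_nonneg (c l)) hk
      have h2 : |c k| ≤ 1 := by
        rw [← Real.sqrt_one, ← Real.sqrt_sq_eq_abs]
        exact Real.sqrt_le_sqrt (by simpa using h1)
      exact Set.mem_Icc.mpr (abs_le.mp h2)
    · exact hc.1 k hk

theorem Ksph_ne_zero (j₀ h : ℕ) {c : ℕ → ℝ} (hc : c ∈ Ksph j₀ h) :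
    ¬ ∀ k ∈ Finset.Icc j₀ (2 * h), c k = 0 := by
  intro hz
  have := hc.2
  rw [Finset.sum_eq_zero (fun k hk => by rw [hz k hk]; ring)] at this
  norm_num at this

theorem uniform_sublevel (j₀ h : ℕ) (ω : ℕ → ℝ) (hj₀ : j₀ ≤ 1)
    (hω0 : ∀ j, j₀ ≤ j → j ≤ h → (ω j = 0 ↔ j = 0))
    (hωdist : ∀ j l, j₀ ≤ j → j ≤ h → j₀ ≤ l → l ≤ h → j ≠ l → ω j ≠ ω l ∧ ω j ≠ -ω l)
    (T μ : ℝ) (hμ : 0 < μ) :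
    ∃ ε > (0:ℝ), ∀ c ∈ Ksph j₀ h,
      volume {s : ℝ | s ∈ Set.Icc (0:ℝ) T ∧ (pP j₀ h ω c s) ^ 2 ≤ ε}
        ≤ ENNReal.ofReal (μ / 2) := by
  -- for each c in the sphere, find δ > 0 with small sublevel measure
  have hch : ∀ c : {c : ℕ → ℝ // c ∈ Ksph j₀ h}, ∃ δ : ℝ, 0 < δ ∧
      volume {s : ℝ | s ∈ Set.Icc (0:ℝ) T ∧ (pP j₀ h ω (c : ℕ → ℝ) s) ^ 2 ≤ δ}
        < ENNReal.ofReal (μ / 2) := by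
    rintro ⟨c, hc⟩
    set A : ℕ → Set ℝ := fun m =>
      {s : ℝ | s ∈ Set.Icc (0:ℝ) T ∧ (pP j₀ h ω c s) ^ 2 ≤ 1 / (m + 1)} with hA
    have hmeas : ∀ m, MeasurableSet (A m) := fun m => by
      refine measurableSet_Icc.inter ?_
      exact (measurableSet_le ((pP_cont j₀ h ω c).pow 2).measurable measurable_const)
    have hanti : Antitone A := by
      intro m m' hmm' s hs
      refine ⟨hs.1, le_trans hs.2 ?_⟩
      have : (m : ℝ) + 1 ≤ (m' : ℝ) + 1 := by exact_mod_cast Nat.succ_le_succ hmm'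
      gcongr
    have hiInter : (⋂ m, A m) = {s : ℝ | s ∈ Set.Icc (0:ℝ) T ∧ pP j₀ h ω c s = 0} := by
      ext s
      simp only [Set.mem_iInter, hA, Set.mem_setOf_eq]
      constructor
      · intro hall
        refine ⟨(hall 0).1, ?_⟩
        have hle : (pP j₀ h ω c s) ^ 2 ≤ 0 := by
          by_contra hpos
          push_neg at hpos
          obtain ⟨m, hm⟩ := exists_nat_one_div_lt hpos
          exact absurd ((hall m).2) (not_le.mpr hm)
        exact pow_eq_zero_iff two_ne_zero |>.mp (le_antisymm hle (sq_nonneg _))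
      · intro ⟨hs1, hs2⟩ m
        exact ⟨hs1, by rw [hs2, zero_pow two_ne_zero]; positivity⟩
    have hzero : volume (⋂ m, A m) = 0 := by
      rw [hiInter]
      exact Set.Finite.measure_zero
        (zeroset_finite j₀ h ω hj₀ hω0 hωdist c (Ksph_ne_zero j₀ h hc) 0 T) volume
    have htend : Tendsto (fun m => volume (A m)) atTop (𝓝 0) := by
      rw [← hzero]
      refine tendsto_measure_iInter_atTop (fun m => (hmeas m).nullMeasurableSet) hanti ⟨0, ?_⟩
      exact ne_top_of_le_ne_top (by simp) (measure_mono (fun s hs => hs.1))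
    have hev : ∀ᶠ m in atTop, volume (A m) < ENNReal.ofReal (μ / 2) :=
      htend.eventually_lt_const (by simp [ENNReal.ofReal_pos]; linarith)
    obtain ⟨m, hm⟩ := hev.exists
    exact ⟨1 / (m + 1), by positivity, hm⟩
  choose δ hδpos hδvol using hch
  -- open cover of the sphere
  set U : {c : ℕ → ℝ // c ∈ Ksph j₀ h} → Set (ℕ → ℝ) := fun c =>
    {c' | (∑ k ∈ Finset.Icc j₀ (2 * h), |c' k - (c : ℕ → ℝ) k|) < Real.sqrt (δ c) / 2}
    with hU
  have hopen : ∀ c, IsOpen (U c) := by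
    intro c
    have hcont : Continuous fun c' : ℕ → ℝ =>
        ∑ k ∈ Finset.Icc j₀ (2 * h), |c' k - (c : ℕ → ℝ) k| :=
      continuous_finset_sum _ fun k _ => ((continuous_apply k).sub continuous_const).abs
    exact isOpen_Iio.preimage hcont
  have hcover : Ksph j₀ h ⊆ ⋃ c, U c := by
    intro c hc
    refine Set.mem_iUnion.mpr ⟨⟨c, hc⟩, ?_⟩
    simp only [hU, Set.mem_setOf_eq, sub_self, abs_zero, Finset.sum_const_zero]
    have := hδpos ⟨c, hc⟩
    positivity
  obtain ⟨t, ht⟩ := (Ksph_compact j₀ h).elim_finite_subcover U hopen hcover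
  rcases t.eq_empty_or_nonempty with rfl | htne
  · refine ⟨1, one_pos, fun c hc => absurd (ht hc) (by simp)⟩
  refine ⟨t.inf' htne (fun c => δ c / 4), ?_, ?_⟩
  · rw [gt_iff_lt, Finset.lt_inf'_iff]
    exact fun c _ => by have := hδpos c; positivity
  · intro c hc
    obtain ⟨i, hit, hci⟩ := Set.mem_iUnion₂.mp (ht hc)
    simp only [hU, Set.mem_setOf_eq] at hci
    have hδi : (0:ℝ) < δ i := hδpos i
    have hsub : {s : ℝ | s ∈ Set.Icc (0:ℝ) T ∧
        (pP j₀ h ω c s) ^ 2 ≤ t.inf' htne (fun c => δ c / 4)}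
        ⊆ {s : ℝ | s ∈ Set.Icc (0:ℝ) T ∧ (pP j₀ h ω (i : ℕ → ℝ) s) ^ 2 ≤ δ i} := by
      rintro s ⟨hs1, hs2⟩
      refine ⟨hs1, ?_⟩
      have h1 : (pP j₀ h ω c s) ^ 2 ≤ δ i / 4 :=
        le_trans hs2 (Finset.inf'_le _ hit)
      have hsq : Real.sqrt (δ i) / 2 ≥ 0 := by positivity
      have habs1 : |pP j₀ h ω c s| ≤ Real.sqrt (δ i) / 2 := by
        rw [← Real.sqrt_sq_eq_abs]
        calc Real.sqrt ((pP j₀ h ω c s) ^ 2) ≤ Real.sqrt (δ i / 4) :=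
              Real.sqrt_le_sqrt h1
          _ = Real.sqrt (δ i) / 2 := by
              rw [show δ i / 4 = (Real.sqrt (δ i) / 2) ^ 2 by
                rw [div_pow, Real.sq_sqrt hδi.le]; norm_num]
              exact Real.sqrt_sq hsq
      have habs2 : |pP j₀ h ω (i : ℕ → ℝ) s| ≤ Real.sqrt (δ i) := by
        calc |pP j₀ h ω (i : ℕ → ℝ) s|
            ≤ |pP j₀ h ω c s| + |pP j₀ h ω (i : ℕ → ℝ) s - pP j₀ h ω c s| := by
              have := abs_add_le (pP j₀ h ω c s)
                (pP j₀ h ω (i : ℕ → ℝ) s - pP j₀ h ω c s)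
              simpa using this
          _ ≤ Real.sqrt (δ i) / 2 + Real.sqrt (δ i) / 2 := by
              refine add_le_add habs1 ?_
              rw [abs_sub_comm]
              exact le_trans (pP_sub_le j₀ h ω c (i : ℕ → ℝ) s) hci.le
          _ = Real.sqrt (δ i) := by ring
      calc (pP j₀ h ω (i : ℕ → ℝ) s) ^ 2 = |pP j₀ h ω (i : ℕ → ℝ) s| ^ 2 := (sq_abs _).symm
        _ ≤ Real.sqrt (δ i) ^ 2 := by gcongr
        _ = δ i := Real.sq_sqrt hδi.le
    exact le_trans (measure_mono hsub) (hδvol i).le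

/-- Phase shift (rotation) of the coefficient vector. -/
def rot (ω : ℕ → ℝ) (t : ℝ) (c : ℕ → ℝ) : ℕ → ℝ := fun k =>
  if k = 0 then c 0
  else if k % 2 = 1 then
    c k * Real.cos (ω ((k + 1) / 2) * t) - c (k + 1) * Real.sin (ω ((k + 1) / 2) * t)
  else
    c (k - 1) * Real.sin (ω (k / 2) * t) + c k * Real.cos (ω (k / 2) * t)

theorem sum_Icc_pair (f : ℕ → ℝ) (h : ℕ) :
    ∑ k ∈ Finset.Icc 1 (2 * h), f k
      = ∑ j ∈ Finset.Icc 1 h, (f (2 * j - 1) + f (2 * j)) := by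
  induction h with
  | zero => simp
  | succ n ih =>
    rw [show 2 * (n + 1) = 2 * n + 1 + 1 by ring,
      Finset.sum_Icc_succ_top (by omega : 1 ≤ 2 * n + 1 + 1),
      Finset.sum_Icc_succ_top (by omega : 1 ≤ 2 * n + 1), ih,
      Finset.sum_Icc_succ_top (by omega : 1 ≤ n + 1)]
    have e1 : 2 * (n + 1) - 1 = 2 * n + 1 := by omega
    have e2 : 2 * (n + 1) = 2 * n + 1 + 1 := by omega
    rw [e1, e2]
    ring

theorem rot_odd (ω : ℕ → ℝ) (t : ℝ) (c : ℕ → ℝ) {j : ℕ} (hj : 1 ≤ j) :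
    rot ω t c (2 * j - 1)
      = c (2 * j - 1) * Real.cos (ω j * t) - c (2 * j) * Real.sin (ω j * t) := by
  have h0 : 2 * j - 1 ≠ 0 := by omega
  have h1 : (2 * j - 1) % 2 = 1 := by omega
  rw [rot, if_neg h0, if_pos h1]
  have e1 : 2 * j - 1 + 1 = 2 * j := by omega
  have e2 : 2 * j / 2 = j := by omega
  rw [e1, e2]

theorem rot_even (ω : ℕ → ℝ) (t : ℝ) (c : ℕ → ℝ) {j : ℕ} (hj : 1 ≤ j) :
    rot ω t c (2 * j)
      = c (2 * j - 1) * Real.sin (ω j * t) + c (2 * j) * Real.cos (ω j * t) := by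
  have h0 : 2 * j ≠ 0 := by omega
  have h1 : ¬ (2 * j) % 2 = 1 := by omega
  rw [rot, if_neg h0, if_neg h1]
  have e2 : 2 * j / 2 = j := by omega
  rw [e2]

theorem pe_odd' (ω : ℕ → ℝ) {j : ℕ} (hj : 1 ≤ j) (s : ℝ) :
    pe ω (2 * j - 1) s = Real.sin (ω j * s) := by
  have e : (2 * j - 1 + 1) / 2 = j := by omega
  rw [pe_odd ω (by omega : (2 * j - 1) % 2 = 1), e]

theorem pe_even' (ω : ℕ → ℝ) {j : ℕ} (hj : 1 ≤ j) (s : ℝ) :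
    pe ω (2 * j) s = Real.cos (ω j * s) := by
  have e : 2 * j / 2 = j := by omega
  rw [pe_even ω (by omega : 2 * j ≠ 0) (by omega : (2 * j) % 2 = 0), e]

theorem pP_rot (j₀ h : ℕ) (ω : ℕ → ℝ) (hj₀ : j₀ ≤ 1) (c : ℕ → ℝ) (t s : ℝ) :
    pP j₀ h ω (rot ω t c) s = pP j₀ h ω c (t + s) := by
  have hpair : ∀ j ∈ Finset.Icc 1 h,
      rot ω t c (2 * j - 1) * pe ω (2 * j - 1) s + rot ω t c (2 * j) * pe ω (2 * j) s
        = c (2 * j - 1) * pe ω (2 * j - 1) (t + s) + c (2 * j) * pe ω (2 * j) (t + s) := by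
    intro j hj
    simp only [Finset.mem_Icc] at hj
    rw [rot_odd ω t c hj.1, rot_even ω t c hj.1, pe_odd' ω hj.1, pe_even' ω hj.1,
      pe_odd' ω hj.1, pe_even' ω hj.1, mul_add (ω j) t s, Real.sin_add, Real.cos_add]
    ring
  interval_cases j₀
  · have hsplit : Finset.Icc 0 (2 * h) = insert 0 (Finset.Icc 1 (2 * h)) := by
      ext x; simp [Finset.mem_Icc, Finset.mem_insert]; omega
    rw [pP, pP, hsplit, Finset.sum_insert (by simp), Finset.sum_insert (by simp),
      sum_Icc_pair, sum_Icc_pair]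
    rw [Finset.sum_congr rfl hpair, pe_zero, pe_zero,
      show rot ω t c 0 = c 0 from if_pos rfl]
  · rw [pP, pP, sum_Icc_pair, sum_Icc_pair]
    exact Finset.sum_congr rfl hpair

theorem rot_mem_Ksph (j₀ h : ℕ) (ω : ℕ → ℝ) (hj₀ : j₀ ≤ 1) (t : ℝ) {c : ℕ → ℝ}
    (hc : c ∈ Ksph j₀ h) : rot ω t c ∈ Ksph j₀ h := by
  obtain ⟨hsupp, hsum⟩ := hc
  constructor
  · intro k hk
    by_cases hk0 : k = 0
    · subst hk0
      rw [rot, if_pos rfl]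
      exact hsupp 0 hk
    · have hk2h : 2 * h < k := by
        simp only [Finset.mem_Icc, not_and, not_le] at hk
        rcases Nat.lt_or_ge k j₀ with hlt | hge
        · omega
        · exact hk hge
      rcases Nat.even_or_odd k with hk2 | hk2
      · have hk2 : k % 2 = 0 := Nat.even_iff.mp hk2
        rw [rot, if_neg hk0, if_neg (by omega)]
        rw [hsupp k (by simp [Finset.mem_Icc]; omega),
          hsupp (k - 1) (by simp [Finset.mem_Icc]; omega)]
        ring
      · have hk2 : k % 2 = 1 := Nat.odd_iff.mp hk2
        rw [rot, if_neg hk0, if_pos hk2]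
        rw [hsupp k (by simp [Finset.mem_Icc]; omega),
          hsupp (k + 1) (by simp [Finset.mem_Icc]; omega)]
        ring
  · have hpair : ∀ j ∈ Finset.Icc 1 h,
        rot ω t c (2 * j - 1) ^ 2 + rot ω t c (2 * j) ^ 2
          = c (2 * j - 1) ^ 2 + c (2 * j) ^ 2 := by
      intro j hj
      simp only [Finset.mem_Icc] at hj
      rw [rot_odd ω t c hj.1, rot_even ω t c hj.1]
      nlinarith [Real.sin_sq_add_cos_sq (ω j * t)]
    interval_cases j₀
    · have hsplit : Finset.Icc 0 (2 * h) = insert 0 (Finset.Icc 1 (2 * h)) := by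
        ext x; simp [Finset.mem_Icc, Finset.mem_insert]; omega
      rw [hsplit, Finset.sum_insert (by simp), sum_Icc_pair] at hsum ⊢
      rw [Finset.sum_congr rfl hpair]
      rw [show rot ω t c 0 = c 0 from if_pos rfl]
      exact hsum
    · rw [sum_Icc_pair] at hsum ⊢
      rw [Finset.sum_congr rfl hpair]
      exact hsum

theorem intervalIntegrable_of_bounded {f : ℝ → ℝ} {C : ℝ} (hm : Measurable f)
    (hb : ∀ s, |f s| ≤ C) (a b : ℝ) : IntervalIntegrable f volume a b :=
  (_root_.intervalIntegrable_const (c := C)).mono_fun' hm.aestronglyMeasurable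
    (ae_of_all _ fun s => by simpa [Real.norm_eq_abs] using hb s)

theorem Ksph_abs_le (j₀ h : ℕ) {c : ℕ → ℝ} (hc : c ∈ Ksph j₀ h) (k : ℕ) : |c k| ≤ 1 := by
  by_cases hk : k ∈ Finset.Icc j₀ (2 * h)
  · have h1 : c k ^ 2 ≤ 1 := by
      rw [← hc.2]
      exact Finset.single_le_sum (fun l _ => sq_nonneg (c l)) hk
    rw [← Real.sqrt_one, ← Real.sqrt_sq_eq_abs]
    exact Real.sqrt_le_sqrt (by simpa using h1)
  · simp [hc.1 k hk]

theorem pP_abs_le (j₀ h : ℕ) (ω : ℕ → ℝ) {c : ℕ → ℝ} (hb : ∀ k, |c k| ≤ 1) (s : ℝ) :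
    |pP j₀ h ω c s| ≤ ((Finset.Icc j₀ (2 * h)).card : ℝ) := by
  rw [pP]
  refine (Finset.abs_sum_le_sum_abs _ _).trans ?_
  calc ∑ k ∈ Finset.Icc j₀ (2 * h), |c k * pe ω k s|
      ≤ ∑ k ∈ Finset.Icc j₀ (2 * h), 1 := by
        refine Finset.sum_le_sum fun k _ => ?_
        rw [abs_mul]
        calc |c k| * |pe ω k s| ≤ 1 * 1 :=
              mul_le_mul (hb k) (pe_abs_le ω k s) (abs_nonneg _) zero_le_one
          _ = 1 := mul_one 1
    _ = ((Finset.Icc j₀ (2 * h)).card : ℝ) := by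
        rw [Finset.sum_const, nsmul_eq_mul, mul_one]

theorem key_lemma (T μ : ℝ) (hμ : 0 < μ) (hμT : μ ≤ T) (j₀ h : ℕ) (hj₀ : j₀ ≤ 1)
    (ω : ℕ → ℝ)
    (hω0 : ∀ j, j₀ ≤ j → j ≤ h → (ω j = 0 ↔ j = 0))
    (hωdist : ∀ j l, j₀ ≤ j → j ≤ h → j₀ ≤ l → l ≤ h → j ≠ l → ω j ≠ ω l ∧ ω j ≠ -ω l) :
    ∃ ξ > (0:ℝ), ∀ α : ℝ → ℝ, Measurable α → (∀ s, α s ∈ Set.Icc (0:ℝ) 1) →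
      ∀ t : ℝ, μ ≤ (∫ s in t..(t + T), α s) → ∀ c ∈ Ksph j₀ h,
        ξ ≤ ∫ s in t..(t + T), α s * (pP j₀ h ω c s) ^ 2 := by
  obtain ⟨ε, hε, hvol⟩ := uniform_sublevel j₀ h ω hj₀ hω0 hωdist T μ hμ
  refine ⟨ε * μ / 2, by positivity, ?_⟩
  intro α hαm hα01 t hαint c hc
  have hT0 : 0 ≤ T := le_trans hμ.le hμT
  set c' := rot ω t c with hc'def
  have hc'K : c' ∈ Ksph j₀ h := rot_mem_Ksph j₀ h ω hj₀ t hc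
  set E : Set ℝ := {s : ℝ | s ∈ Set.Icc (0:ℝ) T ∧ (pP j₀ h ω c' s) ^ 2 ≤ ε} with hEdef
  have hEmeas : MeasurableSet E :=
    measurableSet_Icc.inter
      (measurableSet_le ((pP_cont j₀ h ω c').pow 2).measurable measurable_const)
  have hEvol : volume E ≤ ENNReal.ofReal (μ / 2) := hvol c' hc'K
  set C : ℝ := ((Finset.Icc j₀ (2 * h)).card : ℝ) with hCdef
  have hpPb : ∀ u : ℝ, |pP j₀ h ω c' u| ≤ C :=
    fun u => pP_abs_le j₀ h ω (Ksph_abs_le j₀ h hc'K) u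
  have hα0 : ∀ s, 0 ≤ α s := fun s => (hα01 s).1
  have hα1 : ∀ s, α s ≤ 1 := fun s => (hα01 s).2
  -- change of variables to the window [0, T]
  have hchg : (∫ s in t..(t + T), α s * (pP j₀ h ω c s) ^ 2)
      = ∫ u in (0:ℝ)..T, α (t + u) * (pP j₀ h ω c' u) ^ 2 := by
    have hcv := intervalIntegral.integral_comp_add_left (a := (0:ℝ)) (b := T)
      (fun s => α s * (pP j₀ h ω c s) ^ 2) t
    rw [add_zero] at hcv
    rw [← hcv]
    refine intervalIntegral.integral_congr fun u _ => ?_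
    simp only [hc'def, pP_rot j₀ h ω hj₀ c t u]
  have hαchg : (∫ s in t..(t + T), α s) = ∫ u in (0:ℝ)..T, α (t + u) := by
    have hcv := intervalIntegral.integral_comp_add_left (a := (0:ℝ)) (b := T) α t
    rw [add_zero] at hcv
    rw [← hcv]
  rw [hchg]
  rw [hαchg] at hαint
  -- integrability
  have hmα : Measurable fun u : ℝ => α (t + u) := hαm.comp (measurable_id.const_add t)
  have hint_g : IntervalIntegrable (fun u => α (t + u) * (pP j₀ h ω c' u) ^ 2) volume 0 T := by
    refine intervalIntegrable_of_bounded (C := C ^ 2)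
      (hmα.mul (((pP_cont j₀ h ω c').pow 2).measurable)) (fun u => ?_) 0 T
    show |α (t + u) * (pP j₀ h ω c' u) ^ 2| ≤ C ^ 2
    rw [abs_mul, abs_pow]
    calc |α (t + u)| * |pP j₀ h ω c' u| ^ 2 ≤ 1 * C ^ 2 := by
          refine mul_le_mul ?_ ?_ (by positivity) zero_le_one
          · rw [abs_of_nonneg (hα0 _)]; exact hα1 _
          · exact pow_le_pow_left₀ (abs_nonneg _) (hpPb u) 2
      _ = C ^ 2 := one_mul _
  have hint_a : IntervalIntegrable (fun u => α (t + u)) volume 0 T :=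
    intervalIntegrable_of_bounded (C := 1) hmα
      (fun u => by rw [abs_of_nonneg (hα0 _)]; exact hα1 _) 0 T
  have hint_i : IntervalIntegrable (fun u => E.indicator (fun _ => ε) u) volume 0 T :=
    intervalIntegrable_of_bounded (C := ε) (measurable_const.indicator hEmeas)
      (fun u => by
        by_cases hu : u ∈ E
        · rw [Set.indicator_of_mem hu]; rw [abs_of_pos hε]
        · rw [Set.indicator_of_notMem hu, abs_zero]; exact hε.le) 0 T
  -- pointwise bound
  have hpoint : ∀ u ∈ Set.Icc (0:ℝ) T,
      ε * α (t + u) - E.indicator (fun _ => ε) u ≤ α (t + u) * (pP j₀ h ω c' u) ^ 2 := by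
    intro u hu
    by_cases huE : u ∈ E
    · rw [Set.indicator_of_mem huE]
      nlinarith [hα0 (t + u), hα1 (t + u), sq_nonneg (pP j₀ h ω c' u), hε]
    · rw [Set.indicator_of_notMem huE]
      have hgt : ε < (pP j₀ h ω c' u) ^ 2 := by
        by_contra hle
        push_neg at hle
        exact huE ⟨hu, hle⟩
      nlinarith [hα0 (t + u), hgt]
  have hmono := intervalIntegral.integral_mono_on hT0
    ((hint_a.const_mul ε).sub hint_i) hint_g hpoint
  -- compute the lower integral
  have hsplit : (∫ u in (0:ℝ)..T, (ε * α (t + u) - E.indicator (fun _ => ε) u))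
      = ε * (∫ u in (0:ℝ)..T, α (t + u)) - ∫ u in (0:ℝ)..T, E.indicator (fun _ => ε) u := by
    rw [intervalIntegral.integral_sub (hint_a.const_mul ε) hint_i,
      intervalIntegral.integral_const_mul]
  have hind : (∫ u in (0:ℝ)..T, E.indicator (fun _ => ε) u) ≤ μ / 2 * ε := by
    rw [intervalIntegral.integral_of_le hT0, setIntegral_indicator hEmeas,
      setIntegral_const]
    have hfin : volume (Set.Ioc (0:ℝ) T ∩ E) ≤ ENNReal.ofReal (μ / 2) :=
      le_trans (measure_mono Set.inter_subset_right) hEvol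
    have := ENNReal.toReal_mono (by simp) hfin
    rw [ENNReal.toReal_ofReal (by linarith)] at this
    rw [smul_eq_mul]
    exact mul_le_mul_of_nonneg_right this hε.le
  have hfinal : ε * μ / 2 ≤ ∫ u in (0:ℝ)..T, (ε * α (t + u) - E.indicator (fun _ => ε) u) := by
    rw [hsplit]
    have h1 : ε * μ ≤ ε * ∫ u in (0:ℝ)..T, α (t + u) :=
      mul_le_mul_of_nonneg_left hαint hε.le
    linarith
  linarith

/-- Coefficient vector extracted from `x : Fin (2h+1-j₀) → ℝ`. -/
def coeffOf (j₀ h : ℕ) (x : Fin (2 * h + 1 - j₀) → ℝ) : ℕ → ℝ := fun k =>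
  if hk : j₀ ≤ k ∧ k ≤ 2 * h then x ⟨k - j₀, by omega⟩ else 0

theorem coeffOf_apply (j₀ h : ℕ) (hj₀ : j₀ ≤ 1) (hh : 1 ≤ h)
    (x : Fin (2 * h + 1 - j₀) → ℝ) (i : Fin (2 * h + 1 - j₀)) :
    coeffOf j₀ h x ((i : ℕ) + j₀) = x i := by
  have hi := i.isLt
  rw [coeffOf, dif_pos (by omega : j₀ ≤ (i : ℕ) + j₀ ∧ (i : ℕ) + j₀ ≤ 2 * h)]
  congr 1
  exact Fin.ext (by simp)

theorem Icc_eq_map (j₀ h : ℕ) (hj₀ : j₀ ≤ 1) (hh : 1 ≤ h) :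
    Finset.Icc j₀ (2 * h) = (Finset.range (2 * h + 1 - j₀)).map
      ⟨fun i => i + j₀, add_left_injective j₀⟩ := by
  ext y
  simp only [Finset.mem_Icc, Finset.mem_map, Finset.mem_range, Function.Embedding.coeFn_mk]
  constructor
  · intro hy; exact ⟨y - j₀, by omega, by omega⟩
  · rintro ⟨i, hi, rfl⟩; omega

theorem fin_sum_eq (j₀ h : ℕ) (hj₀ : j₀ ≤ 1) (hh : 1 ≤ h) (g : ℕ → ℝ) :
    ∑ i : Fin (2 * h + 1 - j₀), g ((i : ℕ) + j₀) = ∑ k ∈ Finset.Icc j₀ (2 * h), g k := by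
  rw [Icc_eq_map j₀ h hj₀ hh, Finset.sum_map]
  exact Fin.sum_univ_eq_sum_range (fun m => g (m + j₀)) (2 * h + 1 - j₀)

end PEProof

/-- Lemma 2(2), first part: under the stated conditions on the frequencies `ω_{j₀}, …, ω_h`,
there is `ξ > 0` (depending only on `T, μ` and the `ω_j`) such that for every `(T,μ)`-signal
`α` and every `t ≥ 0`, `∫_t^{t+T} α(τ) v(τ) v(τ)ᵀ dτ ≥ ξ Id` (equivalently, the associated
quadratic form is bounded below by `ξ ‖x‖²`). -/
theorem matrix_pe_lower_bound (T μ : ℝ) (hμ : 0 < μ) (hμT : μ ≤ T)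
    (j₀ h : ℕ) (hj₀ : j₀ = 0 ∨ j₀ = 1) (hh : 1 ≤ h) (hj₀h : j₀ ≤ h)
    (ω : ℕ → ℝ)
    (hω0 : ∀ j, j₀ ≤ j → j ≤ h → (ω j = 0 ↔ j = 0))
    (hωdist : ∀ j l, j₀ ≤ j → j ≤ h → j₀ ≤ l → l ≤ h → j ≠ l → ω j ≠ ω l ∧ ω j ≠ -ω l) :
    ∃ ξ > (0:ℝ), ∀ α : ℝ → ℝ, IsPESignal T μ α → ∀ t : ℝ, 0 ≤ t →
      ∀ x : Fin (2 * h + 1 - j₀) → ℝ,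
        ξ * (∑ i, (x i) ^ 2) ≤
          ∫ s in t..(t + T), α s * (dotProduct x (pev j₀ h ω s)) ^ 2 := by
  have hj₀1 : j₀ ≤ 1 := by rcases hj₀ with rfl | rfl <;> norm_num
  obtain ⟨ξ, hξ, hkey⟩ := PEProof.key_lemma T μ hμ hμT j₀ h hj₀1 ω hω0 hωdist
  refine ⟨ξ, hξ, ?_⟩
  rintro α ⟨hαm, hα01, hαint⟩ t ht x
  have hpev : ∀ (s : ℝ) (i : Fin (2 * h + 1 - j₀)),
      pev j₀ h ω s i = PEProof.pe ω ((i : ℕ) + j₀) s := fun s i => rfl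
  have hdot : ∀ s : ℝ, dotProduct x (pev j₀ h ω s)
      = PEProof.pP j₀ h ω (PEProof.coeffOf j₀ h x) s := by
    intro s
    rw [dotProduct, PEProof.pP, ← PEProof.fin_sum_eq j₀ h hj₀1 hh
      (fun k => PEProof.coeffOf j₀ h x k * PEProof.pe ω k s)]
    refine Finset.sum_congr rfl fun i _ => ?_
    rw [PEProof.coeffOf_apply j₀ h hj₀1 hh x i, hpev s i]
  have hsum : (∑ i, (x i) ^ 2)
      = ∑ k ∈ Finset.Icc j₀ (2 * h), (PEProof.coeffOf j₀ h x k) ^ 2 := by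
    rw [← PEProof.fin_sum_eq j₀ h hj₀1 hh (fun k => (PEProof.coeffOf j₀ h x k) ^ 2)]
    exact Finset.sum_congr rfl fun i _ => by
      rw [PEProof.coeffOf_apply j₀ h hj₀1 hh x i]
  set r := ∑ i, (x i) ^ 2 with hr
  rcases eq_or_lt_of_le (by positivity : (0:ℝ) ≤ r) with hr0 | hrpos
  · -- degenerate case `x = 0`
    have hx0 : ∀ i, x i = 0 := by
      intro i
      have hz := (Finset.sum_eq_zero_iff_of_nonneg
        (fun i (_ : i ∈ Finset.univ) => sq_nonneg (x i))).mp hr0.symm i (Finset.mem_univ i)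
      exact (pow_eq_zero_iff two_ne_zero).mp hz
    have hdz : ∀ s : ℝ, α s * (dotProduct x (pev j₀ h ω s)) ^ 2 = 0 := by
      intro s
      have : dotProduct x (pev j₀ h ω s) = 0 :=
        Finset.sum_eq_zero fun i _ => by rw [hx0 i, zero_mul]
      rw [this]
      ring
    simp only [hdz, intervalIntegral.integral_zero]
    rw [← hr0, mul_zero]
  · -- main case
    have hc₀sum : (∑ k ∈ Finset.Icc j₀ (2 * h), (PEProof.coeffOf j₀ h x k) ^ 2) = r :=
      hsum.symm
    have hsqrt : (0:ℝ) < Real.sqrt r := Real.sqrt_pos.mpr hrpos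
    set d : ℕ → ℝ := fun k => PEProof.coeffOf j₀ h x k / Real.sqrt r with hd
    have hdK : d ∈ PEProof.Ksph j₀ h := by
      constructor
      · intro k hk
        have : PEProof.coeffOf j₀ h x k = 0 := by
          rw [PEProof.coeffOf, dif_neg]
          simpa [Finset.mem_Icc] using hk
        simp only [hd, this, zero_div]
      · have : ∀ k ∈ Finset.Icc j₀ (2 * h),
            d k ^ 2 = (PEProof.coeffOf j₀ h x k) ^ 2 / r := by
          intro k _
          rw [hd]
          rw [div_pow, Real.sq_sqrt hrpos.le]
        rw [Finset.sum_congr rfl this, ← Finset.sum_div, hc₀sum, div_self hrpos.ne']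
    have hPd : ∀ s : ℝ, PEProof.pP j₀ h ω (PEProof.coeffOf j₀ h x) s
        = Real.sqrt r * PEProof.pP j₀ h ω d s := by
      intro s
      rw [PEProof.pP, PEProof.pP, Finset.mul_sum]
      refine Finset.sum_congr rfl fun k _ => ?_
      rw [hd]
      field_simp
    have hkey' := hkey α hαm hα01 t (hαint t ht) d hdK
    have hrw : ∀ s : ℝ, α s * (dotProduct x (pev j₀ h ω s)) ^ 2
        = r * (α s * (PEProof.pP j₀ h ω d s) ^ 2) := by
      intro s
      rw [hdot s, hPd s, mul_pow, Real.sq_sqrt hrpos.le]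
      ring
    calc ξ * r = r * ξ := mul_comm _ _
      _ ≤ r * ∫ s in t..(t + T), α s * (PEProof.pP j₀ h ω d s) ^ 2 :=
          mul_le_mul_of_nonneg_left hkey' hrpos.le
      _ = ∫ s in t..(t + T), r * (α s * (PEProof.pP j₀ h ω d s) ^ 2) :=
          (intervalIntegral.integral_const_mul _ _).symm
      _ = ∫ s in t..(t + T), α s * (dotProduct x (pev j₀ h ω s)) ^ 2 := by
          simp only [hrw]

end
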